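/- With f_Σ as in the hidden variable model parameterization, if θ₀ ∈ ℝ⁴ × (0,∞)⁴ has β₄₀ = 0 and β₃₀ ≠ 0 and (β₁₀, β₂₀) ≠ (0,0), then the fiber f_Σ⁻¹(f_Σ(θ₀)) is infinite; in particular the model is not locally identifiable at θ₀. -/

import Mathlib

open Matrix

noncomputable def fSigma (b w : Fin 4 → ℝ) : Matrix (Fin 4) (Fin 4) ℝ :=
  let q : ℝ := (b 0) ^ 2 * w 0 + (b 1) ^ 2 * w 1 + 1
  !![w 0, 0, b 2 * b 0 * w 0, b 3 * b 0 * w 0;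
     0, w 1, b 2 * b 1 * w 1, b 3 * b 1 * w 1;
     b 2 * b 0 * w 0, b 2 * b 1 * w 1, w 2 + (b 2) ^ 2 * q, b 3 * b 2 * q;
     b 3 * b 0 * w 0, b 3 * b 1 * w 1, b 3 * b 2 * q, w 3 + (b 3) ^ 2 * q]

noncomputable def thFam (b0 w0 : Fin 4 → ℝ) (t : ℝ) : (Fin 4 → ℝ) × (Fin 4 → ℝ) :=
  (![b0 0 / t, b0 1 / t, t * b0 2, 0],
   ![w0 0, w0 1, w0 2 + (b0 2) ^ 2 * (1 - t ^ 2), w0 3])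

lemma thFam_b2 (b0 w0 : Fin 4 → ℝ) (t : ℝ) : (thFam b0 w0 t).1 2 = t * b0 2 := by
  simp [thFam]

lemma thFam_fiber (b0 w0 : Fin 4 → ℝ) (hb4 : b0 3 = 0) {t : ℝ} (ht : t ≠ 0) :
    fSigma (thFam b0 w0 t).1 (thFam b0 w0 t).2 = fSigma b0 w0 := by
  unfold fSigma thFam
  ext i j
  fin_cases i <;> fin_cases j <;> simp [hb4] <;> field_simp <;>
    (first | ring1 | exact Or.inl (by trivial))
lemma thFam_one (b0 w0 : Fin 4 → ℝ) (hb4 : b0 3 = 0) : thFam b0 w0 1 = (b0, w0) := by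
  unfold thFam
  refine Prod.ext ?_ ?_ <;> funext i <;> fin_cases i <;> simp [hb4]

lemma thFam_pos (b0 w0 : Fin 4 → ℝ) (hw0 : ∀ i, 0 < w0 i) {t : ℝ}
    (ht : t ∈ Set.Ioc (0:ℝ) 1) : ∀ i, 0 < (thFam b0 w0 t).2 i := by
  intro i
  have h1 := hw0 0; have h2 := hw0 1; have h3 := hw0 2; have h4 := hw0 3
  have : t ^ 2 ≤ 1 := by nlinarith [ht.1, ht.2]
  fin_cases i <;> simp [thFam] <;> nlinarith [sq_nonneg (b0 2)]

theorem stmt4 (b0 w0 : Fin 4 → ℝ) (hw0 : ∀ i, 0 < w0 i)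
    (hb4 : b0 3 = 0) (hb3 : b0 2 ≠ 0) (hb12 : ¬(b0 0 = 0 ∧ b0 1 = 0)) :
    Set.Infinite {θ : (Fin 4 → ℝ) × (Fin 4 → ℝ) |
        (∀ i, 0 < θ.2 i) ∧ fSigma θ.1 θ.2 = fSigma b0 w0} ∧
      ∀ ε > (0 : ℝ), ∃ θ : (Fin 4 → ℝ) × (Fin 4 → ℝ),
        (∀ i, 0 < θ.2 i) ∧ fSigma θ.1 θ.2 = fSigma b0 w0 ∧ θ ≠ (b0, w0) ∧
          dist θ (b0, w0) < ε := by
  constructor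
  · have hinf : (Set.Ioc (0:ℝ) 1).Infinite := Set.Ioc_infinite (by norm_num)
    have : Infinite (Set.Ioc (0:ℝ) 1) := hinf.to_subtype
    apply Set.infinite_of_injective_forall_mem
      (f := fun t : Set.Ioc (0:ℝ) 1 => thFam b0 w0 t)
    · intro s t hst
      have h2 : (s : ℝ) * b0 2 = (t : ℝ) * b0 2 := by
        have := congrArg (fun p : (Fin 4 → ℝ) × (Fin 4 → ℝ) => p.1 2) hst
        simpa only [thFam_b2] using this
      exact Subtype.ext (mul_right_cancel₀ hb3 h2)
    · intro t
      exact ⟨thFam_pos b0 w0 hw0 t.2, thFam_fiber b0 w0 hb4 (ne_of_gt t.2.1)⟩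
  · intro ε hε
    have hcont : ContinuousAt (thFam b0 w0) 1 := by
      apply ContinuousAt.prodMk <;> apply continuousAt_pi.2 <;> intro i <;>
        fin_cases i <;> simp [thFam] <;>
        first
        | exact ContinuousAt.div continuousAt_const continuousAt_id one_ne_zero
        | fun_prop
    have htend : Filter.Tendsto (thFam b0 w0) (nhdsWithin 1 (Set.Iio 1)) (nhds (b0, w0)) := by
      rw [← thFam_one b0 w0 hb4]
      exact hcont.tendsto.mono_left nhdsWithin_le_nhds
    have h1 := Metric.tendsto_nhds.1 htend ε hε
    have h2 : Set.Ioo (0:ℝ) 1 ∈ nhdsWithin (1:ℝ) (Set.Iio 1) :=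
      Ioo_mem_nhdsLT_of_mem (by constructor <;> norm_num)
    obtain ⟨t, hdist, htI⟩ := (h1.and (Filter.eventually_of_mem h2 fun x hx => hx)).exists
    refine ⟨thFam b0 w0 t, thFam_pos b0 w0 hw0 ⟨htI.1, le_of_lt htI.2⟩,
      thFam_fiber b0 w0 hb4 (ne_of_gt htI.1), ?_, hdist⟩
    intro h
    have h2' : t * b0 2 = 1 * b0 2 := by
      rw [← thFam_b2 b0 w0 t, h, one_mul]
    exact (ne_of_lt htI.2) (mul_right_cancel₀ hb3 h2')
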